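/- arXiv:1901.02778 — 4 statements merged into one kernel-verified Lean document; each statement's English description precedes it below -/
import Mathlib

section
/- For nonnegative reals n₁, e, v, e₁, e₂, v₁, v₂ with n₁ + v + 2v₁ > 0, n₁ + v + 2v₂ > 0, and n₁ + v + v₁ + v₂ > 0, if (n₁ - e - 2e₁)/(n₁ + v + 2v₁) ≥ (n₁ - e - 2e₂)/(n₁ + v + 2v₂), then (n₁ - e - 2e₁)/(n₁ + v + 2v₁) ≥ (n₁ - e - e₁ - e₂)/(n₁ + v + v₁ + v₂). -/
theorem merge_rows_not_worse (n₁ e v e₁ e₂ v₁ v₂ : ℝ)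
    (hn₁ : 0 ≤ n₁) (he : 0 ≤ e) (hv : 0 ≤ v) (he₁ : 0 ≤ e₁) (he₂ : 0 ≤ e₂)
    (hv₁ : 0 ≤ v₁) (hv₂ : 0 ≤ v₂)
    (hd₁ : 0 < n₁ + v + 2*v₁) (hd₂ : 0 < n₁ + v + 2*v₂)
    (hd₃ : 0 < n₁ + v + v₁ + v₂)
    (h : (n₁ - e - 2*e₁)/(n₁ + v + 2*v₁) ≥ (n₁ - e - 2*e₂)/(n₁ + v + 2*v₂)) :
    (n₁ - e - 2*e₁)/(n₁ + v + 2*v₁) ≥ (n₁ - e - e₁ - e₂)/(n₁ + v + v₁ + v₂) := by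
  rw [ge_iff_le, div_le_div_iff₀ hd₂ hd₁] at h
  rw [ge_iff_le, div_le_div_iff₀ hd₃ hd₁]
  nlinarith
end

section
/- Let m, p, n₁ be positive integers, let ñ₁ = n₁ + (mp)². Let e, v, e', v' be natural numbers with e + v ≤ mp, e' + v' ≤ mp, v ≤ mp, v' ≤ mp. If e' + v' < e + v then (ñ₁ - e')/(ñ₁ + v') > (ñ₁ - e)/(ñ₁ + v) (as rational numbers). -/
theorem efficacy_strict_mono (m p n₁ : ℕ) (hm : 0 < m) (hp : 0 < p) (hn₁ : 0 < n₁)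
    (e v e' v' : ℕ) (hev : e + v ≤ m*p) (hev' : e' + v' ≤ m*p)
    (hv : v ≤ m*p) (hv' : v' ≤ m*p)
    (h : e' + v' < e + v) :
    ((n₁ + (m*p)^2 - e' : ℚ)) / ((n₁ + (m*p)^2 + v' : ℚ)) >
      ((n₁ + (m*p)^2 - e : ℚ)) / ((n₁ + (m*p)^2 + v : ℚ)) := by
  have hmp : (1:ℚ) ≤ (m*p : ℕ) := by exact_mod_cast Nat.one_le_iff_ne_zero.mpr (by positivity)
  have hn : (1:ℚ) ≤ (n₁ : ℕ) := by exact_mod_cast hn₁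
  have he : (e:ℚ) ≤ (m*p:ℕ) := by exact_mod_cast le_trans (Nat.le_add_right e v) hev
  have hvq : (v:ℚ) ≤ (m*p:ℕ) := by exact_mod_cast hv
  have he' : (e':ℚ) ≤ (m*p:ℕ) := by exact_mod_cast le_trans (Nat.le_add_right e' v') hev'
  have hv'q : (v':ℚ) ≤ (m*p:ℕ) := by exact_mod_cast hv'
  have hq : (e':ℚ) + v' + 1 ≤ (e:ℚ) + v := by exact_mod_cast h
  have hne : (0:ℚ) ≤ (e:ℚ) := by positivity
  have hnv' : (0:ℚ) ≤ (v':ℚ) := by positivity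
  rw [gt_iff_lt, div_lt_div_iff₀ (by push_cast; nlinarith) (by push_cast; nlinarith)]
  push_cast
  push_cast at hmp he hvq he' hv'q
  nlinarith [sq_nonneg ((m:ℚ)*p), mul_le_mul he' hvq (by positivity) (by positivity : (0:ℚ) ≤ (m:ℚ)*p)]
end

section
/- Let m, p be positive integers, n₁ ≥ 1, ñ₁ = n₁ + (mp)², and let c be an integer with 0 ≤ c < mp. Let e, v be natural numbers with v ≤ mp. If (ñ₁ - e)/(ñ₁ + v) ≥ 1 - c/ñ₁ (as rationals) then e + v ≤ c. -/
theorem reduction_backward (m p n₁ : ℕ) (hm : 0 < m) (hp : 0 < p) (hn₁ : 1 ≤ n₁)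
    (c : ℤ) (hc0 : 0 ≤ c) (hc : c < m*p)
    (e v : ℕ) (hv : v ≤ m*p)
    (h : ((n₁ + (m*p)^2 - e : ℚ)) / ((n₁ + (m*p)^2 + v : ℚ)) ≥
      1 - (c : ℚ) / (n₁ + (m*p)^2 : ℚ)) :
    (e : ℤ) + v ≤ c := by
  have hn₁Q : (1:ℚ) ≤ (n₁:ℚ) := by exact_mod_cast hn₁
  have hmpQ : (1:ℚ) ≤ (m:ℚ)*p := by
    have : 1 ≤ m*p := Nat.one_le_iff_ne_zero.mpr (Nat.mul_ne_zero hm.ne' hp.ne')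
    exact_mod_cast this
  have hN : (0:ℚ) < (n₁:ℚ) + ((m:ℚ)*p)^2 := by nlinarith
  have hNv : (0:ℚ) < (n₁:ℚ) + ((m:ℚ)*p)^2 + (v:ℚ) := by positivity
  push_cast at h
  have h1 : (1 - (c:ℚ)/((n₁:ℚ) + ((m:ℚ)*p)^2)) * ((n₁:ℚ) + ((m:ℚ)*p)^2 + v)
      ≤ (n₁:ℚ) + ((m:ℚ)*p)^2 - e := (le_div_iff₀ hNv).mp h
  have h2 : (1 - (c:ℚ)/((n₁:ℚ) + ((m:ℚ)*p)^2))
      = (((n₁:ℚ) + ((m:ℚ)*p)^2) - c) / ((n₁:ℚ) + ((m:ℚ)*p)^2) := by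
    field_simp
  rw [h2, div_mul_eq_mul_div, div_le_iff₀ hN] at h1
  have hc1Q : (c:ℚ) + 1 ≤ (m:ℚ)*p := by exact_mod_cast hc
  have hc0Q : (0:ℚ) ≤ (c:ℚ) := by exact_mod_cast hc0
  have hvQ : (v:ℚ) ≤ (m:ℚ)*p := by exact_mod_cast hv
  have hv0 : (0:ℚ) ≤ (v:ℚ) := by positivity
  have hcv : (c:ℚ)*v < (n₁:ℚ) + ((m:ℚ)*p)^2 := by nlinarith
  have hlt : (e:ℚ) + v < c + 1 := by nlinarith [h1, hcv, hN]
  rw [← Int.lt_add_one_iff]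
  exact_mod_cast hlt
end

section
/- Let m, p, n₁ be positive integers, ñ₁ = n₁ + (mp)², and c an integer with 0 ≤ c < mp. For all natural numbers e, v with v ≤ mp and e + v ≤ mp: e + v ≤ c if and only if (ñ₁ - e)/(ñ₁ + v) ≥ 1 - c/ñ₁ (as rationals). -/
theorem reduction_equivalence (m p n₁ : ℕ) (hm : 0 < m) (hp : 0 < p) (hn₁ : 0 < n₁)
    (c : ℤ) (hc0 : 0 ≤ c) (hc : c < m*p) :
    ∀ e v : ℕ, v ≤ m*p → e + v ≤ m*p →
      ((e : ℤ) + v ≤ c ↔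
        ((n₁ + (m*p)^2 - e : ℚ)) / ((n₁ + (m*p)^2 + v : ℚ)) ≥
          1 - (c : ℚ) / (n₁ + (m*p)^2 : ℚ)) := by
  intro e v hv hev
  set N : ℚ := (n₁ : ℚ) + ((m : ℚ) * p)^2 with hNdef
  have hmp : (0 : ℚ) < (m : ℚ) * p := by positivity
  have hN : (0 : ℚ) < N := by positivity
  have hNv : (0 : ℚ) < N + v := by positivity
  have hcQ0 : (0 : ℚ) ≤ (c : ℚ) := by exact_mod_cast hc0
  have hcQ : (c : ℚ) < (m : ℚ) * p := by exact_mod_cast hc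
  have hvQ : (v : ℚ) ≤ (m : ℚ) * p := by exact_mod_cast hv
  have hNbig : ((m : ℚ) * p)^2 < N := by
    have : (0 : ℚ) < (n₁ : ℚ) := by exact_mod_cast hn₁
    simp [hNdef]; linarith
  have key : 1 - (c : ℚ) / N = (N - c) / N := by field_simp
  rw [ge_iff_le, key, div_le_div_iff₀ hN hNv]
  constructor
  · intro h
    have hQ : (e : ℚ) + v ≤ c := by exact_mod_cast h
    nlinarith [mul_nonneg hcQ0 (Nat.cast_nonneg v : (0:ℚ) ≤ v)]
  · intro h
    by_contra hcon
    push_neg at hcon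
    have h1 : c + 1 ≤ (e : ℤ) + v := hcon
    have h1Q : (c : ℚ) + 1 ≤ (e : ℚ) + v := by exact_mod_cast h1
    have hcv : (c : ℚ) * v < N := by
      calc (c : ℚ) * v ≤ (c : ℚ) * ((m : ℚ) * p) :=
            mul_le_mul_of_nonneg_left hvQ hcQ0
        _ < ((m : ℚ) * p) * ((m : ℚ) * p) :=
            mul_lt_mul_of_pos_right hcQ hmp
        _ = ((m : ℚ) * p)^2 := by ring
        _ < N := hNbig
    nlinarith
end
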